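/- arXiv:2111.05899 — 3 statements merged into one kernel-verified Lean document; each statement's English description precedes it below -/
import Mathlib

section
/- Let m ≠ ±1 be a squarefree integer with m ≢ 1 (mod 4), m ≢ ±1 (mod 9), and m ≢ ±1, ±7 (mod 25), and let α be a complex root of the irreducible polynomial F(x) = x^60 − m over ℚ. Then the number field K = ℚ(α) is monogenic. -/
open Polynomial NumberField

section Aux

open Module

variable {F L : Type*} [Field F] [Field L] [Algebra F L]

/-- The minimal polynomial equals any monic annihilator whose degree is at most
the degree of the minimal polynomial. -/
lemma minpoly_eq_of_monic_of_natDegree_le {x : L} (hx : IsIntegral F x) {q : F[X]}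
    (hq : q.Monic) (h0 : Polynomial.aeval x q = 0)
    (hle : q.natDegree ≤ (minpoly F x).natDegree) : minpoly F x = q := by
  obtain ⟨c, hc⟩ := minpoly.dvd F x h0
  have hc0 : c ≠ 0 := by
    rintro rfl; rw [mul_zero] at hc; exact hq.ne_zero hc
  have hmul := natDegree_mul (minpoly.ne_zero hx) hc0
  rw [← hc] at hmul
  have hcd : c.natDegree = 0 := by omega
  have hc1 : c = C (c.coeff 0) := eq_C_of_natDegree_eq_zero hcd
  have hlc : c.coeff 0 = 1 := by
    have h1 : q.leadingCoeff = 1 := hq.leadingCoeff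
    rw [hc, leadingCoeff_mul, (minpoly.monic hx).leadingCoeff, one_mul] at h1
    rwa [leadingCoeff, hcd] at h1
  rw [hc, hc1, hlc, map_one, mul_one]

/-- A power basis of the whole field from a generator. -/
noncomputable def pbOfTop {x : L} (hx : IsIntegral F x)
    (hgen : Algebra.adjoin F {x} = ⊤) : PowerBasis F L :=
  (IntermediateField.adjoin.powerBasis hx).map
    ((IntermediateField.equivOfEq (by
        apply IntermediateField.toSubalgebra_injective
        rw [IntermediateField.adjoin_simple_toSubalgebra_of_isAlgebraic hx.isAlgebraic, hgen]
        rfl)).trans IntermediateField.topEquiv)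

lemma pbOfTop_gen {x : L} (hx : IsIntegral F x) (hgen : Algebra.adjoin F {x} = ⊤) :
    (pbOfTop hx hgen).gen = x := rfl

lemma pbOfTop_dim {x : L} (hx : IsIntegral F x) (hgen : Algebra.adjoin F {x} = ⊤) :
    (pbOfTop hx hgen).dim = (minpoly F x).natDegree := rfl

/-- discriminant of a power basis whose minimal polynomial is `X ^ n - C c`. -/
lemma discr_pure_power [FiniteDimensional F L] [Algebra.IsSeparable F L]
    (B : PowerBasis F L) {n : ℕ} (hn : n ≠ 0) {c : F}
    (hmin : minpoly F B.gen = X ^ n - C c) (hfr : finrank F L = n) :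
    ∃ s : ℤ, IsUnit s ∧
      Algebra.discr F B.basis = (s : F) * (n : F) ^ n * c ^ (n - 1) := by
  have hdim : B.dim = n := by
    rw [← B.natDegree_minpoly, hmin, natDegree_X_pow_sub_C]
  have hder : derivative (R := F) (minpoly F B.gen) = C (n : F) * X ^ (n - 1) := by
    rw [hmin, derivative_sub, derivative_C, sub_zero, derivative_X_pow]
  have hnormgen : Algebra.norm F B.gen = (-1 : F) ^ (n + 1) * c := by
    rw [Algebra.PowerBasis.norm_gen_eq_coeff_zero_minpoly, hmin, hdim]
    rw [coeff_sub, coeff_X_pow, coeff_C, if_neg (by omega : ¬ 0 = n), if_pos rfl, zero_sub,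
      pow_succ]
    ring
  have hval : Algebra.norm F (Polynomial.aeval B.gen
      (derivative (R := F) (minpoly F B.gen)))
      = (n : F) ^ n * ((-1 : F) ^ (n + 1) * c) ^ (n - 1) := by
    rw [hder, map_mul, aeval_C, map_pow, aeval_X, MonoidHom.map_mul,
      MonoidHom.map_pow, hnormgen, Algebra.norm_algebraMap, hfr]
  refine ⟨(-1) ^ (n * (n - 1) / 2) * (-1) ^ ((n + 1) * (n - 1)),
    ((isUnit_one.neg).pow _).mul ((isUnit_one.neg).pow _), ?_⟩
  rw [Algebra.discr_powerBasis_eq_norm, hval, hfr]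
  push_cast
  rw [mul_pow, ← pow_mul]
  ring

/-- `X ^ n - C m` is Eisenstein at a prime dividing `m` when `m` is squarefree. -/
lemma eisenstein_X_pow_sub {n : ℕ} (hn : n ≠ 0) {m q : ℤ} (hq : Prime q) (hqm : q ∣ m)
    (hsf : Squarefree m) :
    (X ^ n - C m : ℤ[X]).IsEisensteinAt (Submodule.span ℤ {q}) := by
  have hspan : (Submodule.span ℤ {q} : Ideal ℤ) = Ideal.span {q} := rfl
  rw [hspan]
  constructor
  · rw [(monic_X_pow_sub_C m hn).leadingCoeff]
    rw [Ideal.mem_span_singleton]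
    exact fun h1 => hq.not_unit (isUnit_of_dvd_one h1)
  · intro i hi
    rw [natDegree_X_pow_sub_C] at hi
    rw [coeff_sub, coeff_X_pow, if_neg hi.ne, coeff_C, zero_sub]
    split_ifs
    · rw [Ideal.mem_span_singleton]
      exact hqm.neg_right
    · simpa using Ideal.zero_mem _
  · rw [coeff_sub, coeff_X_pow, if_neg (by omega : ¬ 0 = n), coeff_C, if_pos rfl, zero_sub,
      Ideal.span_singleton_pow, Ideal.mem_span_singleton]
    intro hdvd
    have h2 : q * q ∣ m := by
      have := hdvd.neg_right
      rwa [neg_neg, pow_two] at this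
    exact hq.not_unit (hsf q h2)

/-- Stripping a prime power via an Eisenstein generator. -/
lemma strip_of_eisenstein {L : Type*} [Field L] [Algebra ℚ L] [FiniteDimensional ℚ L]
    {x : L} (hx : IsIntegral ℤ x) (hgen : Algebra.adjoin ℚ {x} = ⊤)
    {q : ℤ} (hq : Prime q) (hei : (minpoly ℤ x).IsEisensteinAt (Submodule.span ℤ {q}))
    {n : ℕ} {y : L} (hy : IsIntegral ℤ y) (hqy : q ^ n • y ∈ Algebra.adjoin ℤ {x}) :
    y ∈ Algebra.adjoin ℤ {x} := by
  have hxQ : IsIntegral ℚ x := hx.tower_top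
  have := mem_adjoin_of_smul_prime_pow_smul_of_minpoly_isEisensteinAt
    (B := pbOfTop hxQ hgen) hq hx hy hqy hei
  exact this

lemma adjoin_sub_algebraMap {R L : Type*} [CommRing R] [CommRing L] [Algebra R L]
    (x : L) (a : R) :
    Algebra.adjoin R {x - algebraMap R L a} = Algebra.adjoin R {x} := by
  apply le_antisymm
  · refine Algebra.adjoin_le (Set.singleton_subset_iff.mpr ?_)
    exact sub_mem (Algebra.self_mem_adjoin_singleton R x)
      (Subalgebra.algebraMap_mem _ a)
  · refine Algebra.adjoin_le (Set.singleton_subset_iff.mpr ?_)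
    have h1 := Algebra.self_mem_adjoin_singleton R (x - algebraMap R L a)
    have h2 := Subalgebra.algebraMap_mem (Algebra.adjoin R {x - algebraMap R L a}) a
    simpa using add_mem h1 h2

/-- Generic stripping of all prime factors of `D`. -/
lemma mem_adjoin_of_smul_of_strip {L : Type*} [CommRing L] [Algebra ℤ L]
    (A : Subalgebra ℤ L) :
    ∀ (n : ℕ) (D : ℤ), D.natAbs = n → D ≠ 0 →
      (∀ q : ℤ, Prime q → q ∣ D → ∀ y : L, IsIntegral ℤ y → q • y ∈ A → y ∈ A) →
      ∀ b : L, IsIntegral ℤ b → D • b ∈ A → b ∈ A := by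
  intro n
  induction n using Nat.strong_induction_on with
  | _ n ih =>
    intro D hn hD hstrip b hb hDb
    by_cases hu : IsUnit D
    · rcases Int.isUnit_iff.mp hu with rfl | rfl
      · simpa using hDb
      · have h2 : b = -((-1 : ℤ) • b) := by simp
        rw [h2]
        exact neg_mem hDb
    · obtain ⟨qn, hqn, hqd⟩ := Nat.exists_prime_and_dvd
        (fun h1 => hu (Int.isUnit_iff_natAbs_eq.mpr h1))
      have hq : Prime (qn : ℤ) := Nat.prime_iff_prime_int.mp hqn
      have hqD : (qn : ℤ) ∣ D := Int.dvd_natAbs.mp (Int.natCast_dvd_natCast.mpr hqd)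
      obtain ⟨D', rfl⟩ := hqD
      have hD'0 : D' ≠ 0 := by rintro rfl; simp at hD
      have hq2 : 2 ≤ (qn : ℤ).natAbs := by
        simpa using hqn.two_le
      have hlt : D'.natAbs < n := by
        rw [← hn, Int.natAbs_mul]
        exact (Nat.lt_mul_iff_one_lt_left (Int.natAbs_pos.mpr hD'0)).mpr (by omega)
      have hD'cast : IsIntegral ℤ (D' • b) := by
        rw [zsmul_eq_mul, show ((D' : ℤ) : L) = algebraMap ℤ L D' by simp]
        exact isIntegral_algebraMap.mul hb
      have hstep : D' • b ∈ A :=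
        hstrip (qn : ℤ) hq (Dvd.intro D' rfl) (D' • b) hD'cast (by rwa [smul_smul])
      exact ih D'.natAbs hlt D' rfl hD'0
        (fun q hq' hqD' y hy hqy => hstrip q hq' (hqD'.mul_left _) y hy hqy) b hb hstep

/-- Decomposition `g = q ^ t * c` with `q ∤ c`. -/
lemma exists_pow_mul_not_dvd {q : ℤ} (hq : Prime q) :
    ∀ (n : ℕ) (g : ℤ), g.natAbs = n → g ≠ 0 →
      ∃ (t : ℕ) (c : ℤ), ¬ q ∣ c ∧ g = q ^ t * c := by
  intro n
  induction n using Nat.strong_induction_on with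
  | _ n ih =>
    intro g hn hg0
    by_cases hqg : q ∣ g
    · obtain ⟨g', rfl⟩ := hqg
      have hg'0 : g' ≠ 0 := by rintro rfl; simp at hg0
      have hq2 : 2 ≤ q.natAbs := (Int.prime_iff_natAbs_prime.mp hq).two_le
      have hlt : g'.natAbs < n := by
        rw [← hn, Int.natAbs_mul]
        exact (Nat.lt_mul_iff_one_lt_left (Int.natAbs_pos.mpr hg'0)).mpr (by omega)
      obtain ⟨t, c, hc, rfl⟩ := ih g'.natAbs hlt g' rfl hg'0
      exact ⟨t + 1, c, hc, by ring⟩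
    · exact ⟨0, g, hqg, by ring⟩

end Aux

section PureField

open Module

/-- The ring of integers of a pure field of prime power degree is generated by
the obvious generator, provided a (possibly shifted) Eisenstein condition holds. -/
lemma pure_ppow_integers {F : Type*} [Field F] [Algebra ℚ F] [FiniteDimensional ℚ F]
    {p k d : ℕ} (hp : p.Prime) (hdp : d = p ^ k) (hd1 : 1 < d)
    {m a : ℤ} (hsf : Squarefree m)
    (ha : (p : ℤ) ∣ a ^ d - m) (ha2 : ¬ ((p : ℤ) ^ 2 ∣ a ^ d - m))
    {w : F} (hw : minpoly ℚ w = X ^ d - C (m : ℚ))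
    (hgen : Algebra.adjoin ℚ {w} = ⊤)
    {b : F} (hb : IsIntegral ℤ b) : b ∈ Algebra.adjoin ℤ {w} := by
  have hd0 : d ≠ 0 := by omega
  have hm0 : m ≠ 0 := by rintro rfl; exact not_squarefree_zero hsf
  have hwd : w ^ d = algebraMap ℚ F (m : ℚ) := by
    have h0 := minpoly.aeval ℚ w
    rw [hw] at h0
    rw [map_sub, map_pow, aeval_X, aeval_C] at h0
    linear_combination h0
  have hwint : IsIntegral ℤ w := by
    refine ⟨X ^ d - C m, monic_X_pow_sub_C m hd0, ?_⟩
    have : (algebraMap ℚ F) (m : ℚ) = algebraMap ℤ F m := by simp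
    simp only [eval₂_sub, eval₂_pow, eval₂_X, eval₂_C]
    rw [hwd, this, sub_self]
  have hwQ : IsIntegral ℚ w := hwint.tower_top
  have hminZ : minpoly ℤ w = X ^ d - C m := by
    have h1 := minpoly.isIntegrallyClosed_eq_field_fractions' ℚ hwint
    apply Polynomial.map_injective (algebraMap ℤ ℚ)
      (fun x y h => by exact_mod_cast h)
    rw [← h1, hw]
    simp [Polynomial.map_sub, Polynomial.map_pow]
  have hgB : (pbOfTop hwQ hgen).gen = w := pbOfTop_gen hwQ hgen
  have hdimB : (pbOfTop hwQ hgen).dim = d := by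
    rw [pbOfTop_dim, hw, natDegree_X_pow_sub_C]
  have hfr : finrank ℚ F = d := by
    rw [(pbOfTop hwQ hgen).finrank, hdimB]
  obtain ⟨s, hs, hdisc⟩ := discr_pure_power (pbOfTop hwQ hgen) hd0
    (by rw [hgB, hw]) hfr
  set D : ℤ := s * (d : ℤ) ^ d * m ^ (d - 1) with hDdef
  have hdisc' : Algebra.discr ℚ (pbOfTop hwQ hgen).basis = (D : ℚ) := by
    rw [hdisc, hDdef]
    push_cast
    ring
  have hD0 : D ≠ 0 := by
    intro h
    refine Algebra.discr_not_zero_of_basis ℚ (pbOfTop hwQ hgen).basis ?_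
    rw [hdisc', h, Int.cast_zero]
  have hmem : D • b ∈ Algebra.adjoin ℤ {w} := by
    have := Algebra.discr_mul_isIntegral_mem_adjoin (R := ℤ) (K := ℚ)
      (B := pbOfTop hwQ hgen) (by rw [hgB]; exact hwint) hb
    rw [hdisc', hgB] at this
    rwa [Int.cast_smul_eq_zsmul] at this
  refine mem_adjoin_of_smul_of_strip (Algebra.adjoin ℤ {w}) D.natAbs D rfl hD0
    ?_ b hb hmem
  intro q hq hqD y hy hqy
  have hql : q ∣ (d : ℤ) ∨ q ∣ m := by
    rcases hq.dvd_mul.mp hqD with h | h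
    · rcases hq.dvd_mul.mp h with h' | h'
      · exact absurd (isUnit_of_dvd_unit h' hs) hq.not_unit
      · exact Or.inl (hq.dvd_of_dvd_pow h')
    · exact Or.inr (hq.dvd_of_dvd_pow h)
  by_cases hqm : q ∣ m
  · -- Eisenstein at q directly
    have hei : (minpoly ℤ w).IsEisensteinAt (Submodule.span ℤ {q}) := by
      rw [hminZ]; exact eisenstein_X_pow_sub hd0 hq hqm hsf
    exact strip_of_eisenstein hwint hgen hq hei hy (n := 1) (by simpa using hqy)
  · -- q is (up to sign) p : use the shifted generator
    have hqd : q ∣ (d : ℤ) := hql.resolve_right hqm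
    have hpZ : Prime ((p : ℕ) : ℤ) := Nat.prime_iff_prime_int.mp hp
    have hqp : Associated q ((p : ℕ) : ℤ) := by
      have h1 : q ∣ ((p : ℤ)) ^ k := by
        refine dvd_trans hqd ?_
        rw [hdp]; push_cast; rfl
      exact hq.associated_of_dvd hpZ (hq.dvd_of_dvd_pow h1)
    -- shifted generator
    set x' := w - algebraMap ℤ F a with hx'def
    have hadj : Algebra.adjoin ℤ {x'} = Algebra.adjoin ℤ {w} :=
      adjoin_sub_algebraMap w a
    have hadjQ : Algebra.adjoin ℚ {x'} = ⊤ := by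
      have h1 : x' = w - algebraMap ℚ F ((a : ℚ)) := by
        rw [hx'def]; norm_num
      rw [h1, adjoin_sub_algebraMap]; exact hgen
    have hx'int : IsIntegral ℤ x' := hwint.sub isIntegral_algebraMap
    have hx'Q : IsIntegral ℚ x' := hx'int.tower_top
    -- the minimal polynomial of x'
    have hframe : finrank ℚ F = (minpoly ℚ x').natDegree := by
      rw [(pbOfTop hx'Q hadjQ).finrank, pbOfTop_dim]
    have hcomp : ((X : ℚ[X]) ^ d - C (m : ℚ)).comp (X + C (a : ℚ))
        = (X + C (a : ℚ)) ^ d - C (m : ℚ) := by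
      simp [sub_comp, pow_comp]
    have hq' : minpoly ℚ x' = (X + C (a : ℚ)) ^ d - C (m : ℚ) := by
      rw [← hcomp]
      refine minpoly_eq_of_monic_of_natDegree_le hx'Q ?_ ?_ ?_
      · exact (monic_X_pow_sub_C _ hd0).comp_X_add_C _
      · rw [aeval_comp]
        have h2 : (Polynomial.aeval x') (X + C (a : ℚ)) = w := by
          rw [map_add, aeval_X, aeval_C, hx'def]
          norm_num
        rw [h2, map_sub, map_pow, aeval_X, aeval_C, hwd, sub_self]
      · rw [natDegree_comp, natDegree_X_pow_sub_C, natDegree_X_add_C, mul_one,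
          ← hframe, hfr]
    have hminZ' : minpoly ℤ x' = (X + C a) ^ d - C m := by
      have h1 := minpoly.isIntegrallyClosed_eq_field_fractions' ℚ hx'int
      apply Polynomial.map_injective (algebraMap ℤ ℚ)
        (fun x y h => by exact_mod_cast h)
      rw [← h1, hq']
      simp [Polynomial.map_sub, Polynomial.map_pow, Polynomial.map_add]
    have hei : (minpoly ℤ x').IsEisensteinAt (Submodule.span ℤ {q}) := by
      have hspan : (Submodule.span ℤ {q} : Ideal ℤ) = Ideal.span {((p : ℕ) : ℤ)} := by
        rw [show (Submodule.span ℤ {q} : Ideal ℤ) = Ideal.span {q} from rfl,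
          Ideal.span_singleton_eq_span_singleton]
        exact hqp
      rw [hspan, hminZ']
      constructor
      · have hmon : ((X + C a) ^ d - C m).Monic := by
          have := (monic_X_pow_sub_C m hd0).comp_X_add_C a
          rwa [show ((X : ℤ[X]) ^ d - C m).comp (X + C a)
            = (X + C a) ^ d - C m by simp [sub_comp, pow_comp]] at this
        rw [hmon.leadingCoeff, Ideal.mem_span_singleton]
        exact fun h1 => hpZ.not_unit (isUnit_of_dvd_one h1)
      · intro i hi
        have hdeg : ((X + C a) ^ d - C m).natDegree = d := by
          have := natDegree_comp (p := (X : ℤ[X]) ^ d - C m) (q := X + C a)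
          rw [show ((X : ℤ[X]) ^ d - C m).comp (X + C a)
            = (X + C a) ^ d - C m by simp [sub_comp, pow_comp],
            natDegree_X_pow_sub_C, natDegree_X_add_C, mul_one] at this
          exact this
        rw [hdeg] at hi
        rw [coeff_sub, coeff_X_add_C_pow, coeff_C, Ideal.mem_span_singleton]
        by_cases h0 : i = 0
        · subst h0
          simpa using ha
        · rw [if_neg h0, sub_zero]
          have hchoose : (p : ℤ) ∣ (d.choose i : ℤ) := by
            have := hp.dvd_choose_pow h0 (by rw [← hdp]; exact hi.ne)
            rw [hdp]
            exact_mod_cast this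
          exact Dvd.dvd.mul_left hchoose _
      · rw [coeff_sub, coeff_X_add_C_pow, coeff_C, if_pos rfl,
          Ideal.span_singleton_pow, Ideal.mem_span_singleton]
        simpa using ha2
    have hfin : y ∈ Algebra.adjoin ℤ {x'} := by
      refine strip_of_eisenstein hx'int hadjQ hq hei hy (n := 1) ?_
      rw [hadj]
      simpa using hqy
    rwa [hadj] at hfin

end PureField

section ExistsA

lemma exists_a_two {m : ℤ} (h4 : ¬ m ≡ 1 [ZMOD 4]) (hm2 : ¬ (2 : ℤ) ∣ m) :
    ∃ a : ℤ, ((2 : ℕ) : ℤ) ∣ a ^ 4 - m ∧ ¬ (((2 : ℕ) : ℤ) ^ 2 ∣ a ^ 4 - m) := by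
  refine ⟨1, ?_, ?_⟩
  · push_cast; omega
  · push_cast
    intro h
    exact h4 ((Int.modEq_iff_dvd).mpr (by omega))

lemma exists_a_three {m : ℤ} (hsf : Squarefree m)
    (h9 : ¬ m ≡ 1 [ZMOD 9]) (h9' : ¬ m ≡ -1 [ZMOD 9]) :
    ∃ a : ℤ, ((3 : ℕ) : ℤ) ∣ a ^ 3 - m ∧ ¬ (((3 : ℕ) : ℤ) ^ 2 ∣ a ^ 3 - m) := by
  have h90 : ¬ (9 : ℤ) ∣ m := by
    intro h
    have h3 : Prime (3 : ℤ) := Int.prime_iff_natAbs_prime.mpr (by norm_num)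
    exact h3.not_unit (hsf 3 (by omega))
  refine ⟨m, ?_, ?_⟩
  · have h1 : ((m ^ 3 - m : ℤ) : ZMod 3) = 0 := by
      push_cast
      exact (by decide : ∀ x : ZMod 3, x ^ 3 - x = 0) (m : ZMod 3)
    have := (ZMod.intCast_zmod_eq_zero_iff_dvd (m ^ 3 - m) 3).mp h1
    exact_mod_cast this
  · intro h
    have h1 : ((m ^ 3 - m : ℤ) : ZMod 9) = 0 := by
      rw [ZMod.intCast_zmod_eq_zero_iff_dvd]
      exact_mod_cast h
    have h2 : ((m : ZMod 9)) ≠ 1 := by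
      intro hh
      exact h9 (by
        have := (ZMod.intCast_eq_intCast_iff m 1 9).mp (by push_cast; exact hh)
        exact_mod_cast this)
    have h3 : ((m : ZMod 9)) ≠ -1 := by
      intro hh
      exact h9' (by
        have := (ZMod.intCast_eq_intCast_iff m (-1) 9).mp (by push_cast; exact hh)
        exact_mod_cast this)
    have h0 : ((m : ZMod 9)) ≠ 0 := by
      intro hh
      exact h90 (by exact_mod_cast (ZMod.intCast_zmod_eq_zero_iff_dvd m 9).mp hh)
    push_cast at h1
    exact (by decide : ∀ x : ZMod 9, x ≠ 0 → x ≠ 1 → x ≠ -1 → x ^ 3 - x ≠ 0)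
      (m : ZMod 9) h0 h2 h3 h1

lemma exists_a_five {m : ℤ} (hsf : Squarefree m)
    (h25 : ¬ m ≡ 1 [ZMOD 25]) (h25' : ¬ m ≡ -1 [ZMOD 25])
    (h25'' : ¬ m ≡ 7 [ZMOD 25]) (h25''' : ¬ m ≡ -7 [ZMOD 25]) :
    ∃ a : ℤ, ((5 : ℕ) : ℤ) ∣ a ^ 5 - m ∧ ¬ (((5 : ℕ) : ℤ) ^ 2 ∣ a ^ 5 - m) := by
  have h250 : ¬ (25 : ℤ) ∣ m := by
    intro h
    have h5 : Prime (5 : ℤ) := Int.prime_iff_natAbs_prime.mpr (by norm_num)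
    exact h5.not_unit (hsf 5 (by omega))
  refine ⟨m, ?_, ?_⟩
  · have h1 : ((m ^ 5 - m : ℤ) : ZMod 5) = 0 := by
      push_cast
      exact (by decide : ∀ x : ZMod 5, x ^ 5 - x = 0) (m : ZMod 5)
    have := (ZMod.intCast_zmod_eq_zero_iff_dvd (m ^ 5 - m) 5).mp h1
    exact_mod_cast this
  · intro h
    have h1 : ((m ^ 5 - m : ℤ) : ZMod 25) = 0 := by
      rw [ZMod.intCast_zmod_eq_zero_iff_dvd]
      exact_mod_cast h
    have h2 : ((m : ZMod 25)) ≠ 1 := by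
      intro hh
      exact h25 (by
        have := (ZMod.intCast_eq_intCast_iff m 1 25).mp (by push_cast; exact hh)
        exact_mod_cast this)
    have h3 : ((m : ZMod 25)) ≠ -1 := by
      intro hh
      exact h25' (by
        have := (ZMod.intCast_eq_intCast_iff m (-1) 25).mp (by push_cast; exact hh)
        exact_mod_cast this)
    have h7 : ((m : ZMod 25)) ≠ 7 := by
      intro hh
      exact h25'' (by
        have := (ZMod.intCast_eq_intCast_iff m 7 25).mp (by push_cast; exact hh)
        exact_mod_cast this)
    have h7' : ((m : ZMod 25)) ≠ -7 := by
      intro hh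
      exact h25''' (by
        have := (ZMod.intCast_eq_intCast_iff m (-7) 25).mp (by push_cast; exact hh)
        exact_mod_cast this)
    have h0 : ((m : ZMod 25)) ≠ 0 := by
      intro hh
      exact h250 (by exact_mod_cast (ZMod.intCast_zmod_eq_zero_iff_dvd m 25).mp hh)
    push_cast at h1
    exact (by decide : ∀ x : ZMod 25, x ≠ 0 → x ≠ 1 → x ≠ -1 → x ≠ 7 → x ≠ -7 →
      x ^ 5 - x ≠ 0) (m : ZMod 25) h0 h2 h3 h7 h7' h1

end ExistsA

section Tower

open Module IntermediateField

set_option maxHeartbeats 1000000 in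
/-- For `p ∈ {2,3,5}` not dividing `m`, multiplication by an integer prime to `p`
sends any algebraic integer into `ℤ[α]`: go through the pure subfield of degree the
`p`-part of `60`. -/
lemma tower_strip {K : Type*} [Field K] [NumberField K]
    {p k d e : ℕ} (hp : p.Prime) (hdp : d = p ^ k) (hd1 : 1 < d) (he1 : 0 < e)
    {m a : ℤ} (hsf : Squarefree m) (hpe : ¬ (p : ℤ) ∣ (e : ℤ)) (hpm : ¬ (p : ℤ) ∣ m)
    (ha : (p : ℤ) ∣ a ^ d - m) (ha2 : ¬ ((p : ℤ) ^ 2 ∣ a ^ d - m))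
    {α : K} (hα : α ^ (d * e) = (m : K)) (hgen : Algebra.adjoin ℚ {α} = ⊤)
    (hfr : finrank ℚ K = d * e)
    {z : K} (hz : IsIntegral ℤ z) :
    ∃ c : ℤ, ¬ (p : ℤ) ∣ c ∧ c • z ∈ Algebra.adjoin ℤ {α} := by
  have hm0 : m ≠ 0 := by rintro rfl; exact not_squarefree_zero hsf
  have hde0 : d * e ≠ 0 := by positivity
  have hαint : IsIntegral ℤ α := by
    refine ⟨X ^ (d * e) - C m, monic_X_pow_sub_C m hde0, ?_⟩
    simp only [eval₂_sub, eval₂_pow, eval₂_X, eval₂_C]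
    rw [hα]
    simp
  have hαQ : IsIntegral ℚ α := hαint.tower_top
  set w : K := α ^ e with hwdef
  have hwd : w ^ d = (m : K) := by
    rw [hwdef, ← pow_mul, mul_comm e d, hα]
  have hwint : IsIntegral ℤ w := hαint.pow e
  have hQw : IsIntegral ℚ w := hwint.tower_top
  -- the subfield F = ℚ(w)
  set F : IntermediateField ℚ K := ℚ⟮w⟯ with hFdef
  set w' : F := IntermediateField.AdjoinSimple.gen ℚ w with hw'def
  have hmapw' : algebraMap F K w' = w := IntermediateField.AdjoinSimple.algebraMap_gen ℚ w
  -- degree bookkeeping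
  have haev : Polynomial.aeval w ((X : ℚ[X]) ^ d - C (m : ℚ)) = 0 := by
    rw [map_sub, map_pow, aeval_X, aeval_C, hwd]
    simp
  have hxle : finrank ℚ F ≤ d := by
    rw [IntermediateField.adjoin.finrank hQw]
    have h1 := natDegree_le_of_dvd (minpoly.dvd ℚ w haev)
      (monic_X_pow_sub_C (m : ℚ) (by omega)).ne_zero
    rwa [natDegree_X_pow_sub_C] at h1
  have hgenF : Algebra.adjoin F {α} = ⊤ := by
    rw [eq_top_iff]
    intro u hu0
    have hu : u ∈ Algebra.adjoin ℚ ({α} : Set K) := by rw [hgen]; trivial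
    clear hu0
    induction hu using Algebra.adjoin_induction with
    | mem v hv => exact Algebra.subset_adjoin hv
    | algebraMap r =>
      rw [IsScalarTower.algebraMap_apply ℚ F K r]
      exact Subalgebra.algebraMap_mem _ _
    | add x y _ _ hx hy => exact add_mem hx hy
    | mul x y _ _ hx hy => exact mul_mem hx hy
  have hFα : IsIntegral F α := hαQ.tower_top
  have hyle : finrank F K ≤ e := by
    rw [(pbOfTop hFα hgenF).finrank, pbOfTop_dim]
    have haev2 : Polynomial.aeval α ((X : Polynomial F) ^ e - C w') = 0 := by
      rw [map_sub, map_pow, aeval_X, aeval_C, hmapw', hwdef]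
      simp
    have h1 := natDegree_le_of_dvd (minpoly.dvd F α haev2)
      (monic_X_pow_sub_C w' (by omega)).ne_zero
    rwa [natDegree_X_pow_sub_C] at h1
  have hprod : finrank ℚ F * finrank F K = d * e := by
    rw [finrank_mul_finrank ℚ F K, hfr]
  have hye : finrank F K = e := by
    have hd0 : 0 < d := by omega
    have h1 : d * e ≤ d * finrank F K := by
      calc d * e = finrank ℚ F * finrank F K := hprod.symm
        _ ≤ d * finrank F K := Nat.mul_le_mul_right _ hxle
    have h2 : e ≤ finrank F K := Nat.le_of_mul_le_mul_left h1 hd0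
    omega
  have hxd : finrank ℚ F = d := by
    have := hprod
    rw [hye] at this
    exact Nat.eq_of_mul_eq_mul_right he1 this
  -- minimal polynomials
  have hndeg : (minpoly F α).natDegree = finrank F K := by
    rw [(pbOfTop hFα hgenF).finrank, pbOfTop_dim]
  have hminFα : minpoly F α = X ^ e - C w' := by
    refine minpoly_eq_of_monic_of_natDegree_le hFα
      (monic_X_pow_sub_C w' (by omega)) ?_ ?_
    · rw [map_sub, map_pow, aeval_X, aeval_C, hmapw', hwdef]; simp
    · rw [natDegree_X_pow_sub_C, hndeg, hye]
  have hminQw : minpoly ℚ w = X ^ d - C (m : ℚ) := by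
    refine minpoly_eq_of_monic_of_natDegree_le hQw
      (monic_X_pow_sub_C _ (by omega)) haev ?_
    rw [natDegree_X_pow_sub_C]
    have h2 := IntermediateField.adjoin.finrank hQw
    rw [← hFdef] at h2
    omega
  have hminQw' : minpoly ℚ w' = X ^ d - C (m : ℚ) := by
    rw [hw'def]; exact (IntermediateField.minpoly_gen ℚ w).trans hminQw
  have hgenF' : Algebra.adjoin ℚ {w'} = ⊤ := by
    have := (IntermediateField.adjoin.powerBasis hQw).adjoin_gen_eq_top
    exact this
  -- relative discriminant
  have hgBK : (pbOfTop hFα hgenF).gen = α := pbOfTop_gen hFα hgenF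
  obtain ⟨s, hs, hdiscF⟩ := discr_pure_power (pbOfTop hFα hgenF) (by omega : e ≠ 0)
    (by rw [hgBK, hminFα]) hye
  -- main inclusion
  haveI : IsScalarTower ℤ (𝓞 F) K := IsScalarTower.of_algebraMap_eq (fun n => by
    rw [eq_intCast (algebraMap ℤ K), eq_intCast (algebraMap ℤ (𝓞 F)), map_intCast])
  have hzOF : IsIntegral (𝓞 F) z := hz.tower_top
  have hαOF : IsIntegral (𝓞 F) α := hαint.tower_top
  have hmain := Algebra.discr_mul_isIntegral_mem_adjoin (R := 𝓞 F) (K := F) (L := K)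
    (B := pbOfTop hFα hgenF) (by rw [hgBK]; exact hαOF) hzOF
  rw [hgBK, Algebra.smul_def] at hmain
  -- multiply by a power of w
  set c : ℤ := s * (e : ℤ) ^ e * m ^ e with hcdef
  have hkey : (c : K) * z = w ^ (e * (d - 1) + 1) *
      (algebraMap F K (Algebra.discr F (pbOfTop hFα hgenF).basis) * z) := by
    rw [hdiscF]
    rw [map_mul, map_mul, map_pow, map_intCast, map_natCast, map_pow, hmapw']
    have hmpow : (m : K) ^ e = w ^ (d * e) := by rw [pow_mul, hwd]
    have hcK : ((c : ℤ) : K) = (s : K) * (e : K) ^ e * (m : K) ^ e := by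
      rw [hcdef]; push_cast; ring
    rw [hcK, hmpow]
    have hexp : d * e = (e * (d - 1) + 1) + (e - 1) := by
      cases d with
      | zero => omega
      | succ d' =>
        cases e with
        | zero => omega
        | succ e' =>
          simp only [Nat.add_sub_cancel]
          ring
    rw [hexp, pow_add]
    ring
  have hαS : α ∈ Algebra.adjoin (𝓞 F) ({α} : Set K) := Algebra.subset_adjoin rfl
  have hwS : w ∈ Algebra.adjoin (𝓞 F) ({α} : Set K) := by
    rw [hwdef]
    exact Subalgebra.pow_mem _ hαS e
  have hcS : (c : K) * z ∈ Algebra.adjoin (𝓞 F) ({α} : Set K) := by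
    rw [hkey]
    exact Subalgebra.mul_mem _ (Subalgebra.pow_mem _ hwS _) hmain
  -- S ⊆ adjoin ℤ {α}
  have hWA : Algebra.adjoin ℤ ({w} : Set K) ≤ Algebra.adjoin ℤ {α} := by
    refine Algebra.adjoin_le (Set.singleton_subset_iff.mpr ?_)
    rw [hwdef]
    exact pow_mem (Algebra.self_mem_adjoin_singleton ℤ α) e
  have hsub : ∀ u ∈ Algebra.adjoin (𝓞 F) ({α} : Set K),
      u ∈ Algebra.adjoin ℤ ({α} : Set K) := by
    intro u hu
    induction hu using Algebra.adjoin_induction with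
    | mem v hv => exact Algebra.subset_adjoin hv
    | algebraMap r =>
      have hrint : IsIntegral ℤ (algebraMap (𝓞 F) F r) :=
        NumberField.RingOfIntegers.isIntegral_coe r
      have hrF : (algebraMap (𝓞 F) F r) ∈ Algebra.adjoin ℤ {w'} :=
        pure_ppow_integers hp hdp hd1 hsf ha ha2 hminQw' hgenF' hrint
      have hmapmem : algebraMap F K (algebraMap (𝓞 F) F r)
          ∈ Algebra.adjoin ℤ ({w} : Set K) := by
        have h1 : algebraMap F K (algebraMap (𝓞 F) F r)
            ∈ (Algebra.adjoin ℤ ({w'} : Set F)).map (algebraMap F K).toIntAlgHom :=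
          Subalgebra.mem_map.mpr ⟨_, hrF, rfl⟩
        rw [AlgHom.map_adjoin_singleton] at h1
        rwa [show (algebraMap F K).toIntAlgHom w' = w from hmapw'] at h1
      have heq : algebraMap (𝓞 F) K r = algebraMap F K (algebraMap (𝓞 F) F r) :=
        IsScalarTower.algebraMap_apply (𝓞 F) F K r
      rw [heq]
      exact hWA hmapmem
    | add x y _ _ hx hy => exact add_mem hx hy
    | mul x y _ _ hx hy => exact mul_mem hx hy
  refine ⟨c, ?_, ?_⟩
  · intro hdvd
    have hpZ : Prime ((p : ℕ) : ℤ) := Nat.prime_iff_prime_int.mp hp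
    rcases hpZ.dvd_mul.mp hdvd with h | h
    · rcases hpZ.dvd_mul.mp h with h' | h'
      · exact hpZ.not_unit (isUnit_of_dvd_unit h' hs)
      · exact hpe (hpZ.dvd_of_dvd_pow h')
    · exact hpm (hpZ.dvd_of_dvd_pow h)
  · have h2 : (c : K) * z ∈ Algebra.adjoin ℤ ({α} : Set K) := hsub _ hcS
    have h3 : (c : ℤ) • z = ((c : ℤ) : K) * z := by
      rw [Algebra.smul_def, eq_intCast]
    rw [h3]
    exact h2
end Tower

/-- If `m ≠ ±1` is squarefree with `m ≢ 1 (mod 4)`, `m ≢ ±1 (mod 9)` and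
`m ≢ ±1, ±7 (mod 25)`, then the pure number field `K = ℚ(α)`, `α` a root of the
irreducible polynomial `x^60 - m`, is monogenic: its ring of integers has a power
integral basis. -/
theorem pure_deg60_monogenic
    (m : ℤ) (hsf : Squarefree m) (hm1 : m ≠ 1) (hm2 : m ≠ -1)
    (h4 : ¬ m ≡ 1 [ZMOD 4])
    (h9 : ¬ m ≡ 1 [ZMOD 9]) (h9' : ¬ m ≡ -1 [ZMOD 9])
    (h25 : ¬ m ≡ 1 [ZMOD 25]) (h25' : ¬ m ≡ -1 [ZMOD 25])
    (h25'' : ¬ m ≡ 7 [ZMOD 25]) (h25''' : ¬ m ≡ -7 [ZMOD 25])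
    (hirr : Irreducible ((X : ℚ[X]) ^ 60 - C (m : ℚ)))
    (K : Type*) [Field K] [NumberField K] (α : K)
    (hα : α ^ 60 = (m : K))
    (hgen : Algebra.adjoin ℚ {α} = ⊤) :
    ∃ θ : 𝓞 K, Algebra.adjoin ℤ {θ} = ⊤ := by
  have hm0 : m ≠ 0 := by rintro rfl; exact not_squarefree_zero hsf
  have hαint : IsIntegral ℤ α := by
    refine ⟨X ^ 60 - C m, monic_X_pow_sub_C m (by norm_num), ?_⟩
    simp only [eval₂_sub, eval₂_pow, eval₂_X, eval₂_C]
    rw [hα]; simp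
  have hαQ : IsIntegral ℚ α := hαint.tower_top
  have haev60 : Polynomial.aeval α ((X : ℚ[X]) ^ 60 - C (m : ℚ)) = 0 := by
    rw [map_sub, map_pow, aeval_X, aeval_C, hα]; simp
  have hminQ : minpoly ℚ α = X ^ 60 - C (m : ℚ) :=
    (minpoly.eq_of_irreducible_of_monic hirr haev60 (monic_X_pow_sub_C _ (by norm_num))).symm
  have hminZ : minpoly ℤ α = X ^ 60 - C m := by
    have h1 := minpoly.isIntegrallyClosed_eq_field_fractions' ℚ hαint
    apply Polynomial.map_injective (algebraMap ℤ ℚ)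
      (fun x y h => by exact_mod_cast h)
    rw [← h1, hminQ]
    simp [Polynomial.map_sub, Polynomial.map_pow]
  have hgB : (pbOfTop hαQ hgen).gen = α := pbOfTop_gen hαQ hgen
  have hfr : Module.finrank ℚ K = 60 := by
    rw [(pbOfTop hαQ hgen).finrank, pbOfTop_dim, hminQ, natDegree_X_pow_sub_C]
  obtain ⟨s, hs, hdisc⟩ := discr_pure_power (pbOfTop hαQ hgen) (by norm_num)
    (by rw [hgB, hminQ]) hfr
  set D : ℤ := s * 60 ^ 60 * m ^ 59 with hDdef
  have hdisc' : Algebra.discr ℚ (pbOfTop hαQ hgen).basis = (D : ℚ) := by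
    rw [hdisc, hDdef]
    push_cast
    norm_num
  have hD0 : D ≠ 0 := by
    intro h
    refine Algebra.discr_not_zero_of_basis ℚ (pbOfTop hαQ hgen).basis ?_
    rw [hdisc', h, Int.cast_zero]
  suffices hint : ∀ z : K, IsIntegral ℤ z → z ∈ Algebra.adjoin ℤ {α} by
    refine ⟨⟨α, hαint⟩, ?_⟩
    rw [eq_top_iff]
    rintro x -
    have hx : (algebraMap (𝓞 K) K x) ∈ Algebra.adjoin ℤ {α} :=
      hint _ x.isIntegral_coe
    have hmap : (Algebra.adjoin ℤ {(⟨α, hαint⟩ : 𝓞 K)}).map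
        (algebraMap (𝓞 K) K).toIntAlgHom = Algebra.adjoin ℤ {α} := by
      erw [AlgHom.map_adjoin_singleton]
      rfl
    rw [← hmap] at hx
    obtain ⟨y, hy, hyx⟩ := hx
    have hxy : y = x := NumberField.RingOfIntegers.coe_injective hyx
    exact hxy ▸ hy
  intro z hz
  set A := Algebra.adjoin ℤ ({α} : Set K) with hAdef
  -- the ideal of multipliers
  set I : Ideal ℤ :=
    { carrier := {n : ℤ | n • z ∈ A}
      add_mem' := fun {a b} ha hb => by
        simp only [Set.mem_setOf_eq] at *
        rw [add_smul]; exact add_mem ha hb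
      zero_mem' := by
        simp only [Set.mem_setOf_eq, zero_smul]; exact zero_mem A
      smul_mem' := fun r x hx => by
        simp only [Set.mem_setOf_eq] at *
        rw [smul_eq_mul, mul_smul]
        exact A.smul_mem hx r } with hIdef
  have hmemI : ∀ n : ℤ, n ∈ I ↔ n • z ∈ A := fun n => Iff.rfl
  have hDI : D ∈ I := by
    rw [hmemI]
    have := Algebra.discr_mul_isIntegral_mem_adjoin (R := ℤ) (K := ℚ)
      (B := pbOfTop hαQ hgen) (by rw [hgB]; exact hαint) hz
    rw [hdisc', hgB] at this
    rwa [Int.cast_smul_eq_zsmul] at this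
  obtain ⟨g, hg⟩ := (IsPrincipalIdealRing.principal I).principal
  have hg0 : g ≠ 0 := by
    rintro rfl
    rw [hg, Submodule.span_zero_singleton] at hDI
    exact hD0 (by simpa using hDI)
  have hgI : g ∈ I := by rw [hg]; exact Ideal.subset_span rfl
  have hnat : g.natAbs = 1 := by
    by_contra hne
    obtain ⟨qn, hqn, hqd⟩ := Nat.exists_prime_and_dvd hne
    have hq : Prime ((qn : ℕ) : ℤ) := Nat.prime_iff_prime_int.mp hqn
    have hqg : ((qn : ℕ) : ℤ) ∣ g := Int.dvd_natAbs.mp (Int.natCast_dvd_natCast.mpr hqd)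
    have hgD : g ∣ D := by
      rw [hg] at hDI
      exact Ideal.mem_span_singleton.mp hDI
    have hqD : ((qn : ℕ) : ℤ) ∣ D := hqg.trans hgD
    have hq60m : ((qn : ℕ) : ℤ) ∣ (60 : ℤ) ∨ ((qn : ℕ) : ℤ) ∣ m := by
      rcases hq.dvd_mul.mp hqD with h | h
      · rcases hq.dvd_mul.mp h with h' | h'
        · exact absurd (isUnit_of_dvd_unit h' hs) hq.not_unit
        · exact Or.inl (hq.dvd_of_dvd_pow h')
      · exact Or.inr (hq.dvd_of_dvd_pow h)
    have hcon : ∃ c : ℤ, ¬ ((qn : ℕ) : ℤ) ∣ c ∧ c ∈ I := by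
      by_cases hqm : ((qn : ℕ) : ℤ) ∣ m
      · -- Eisenstein at q
        obtain ⟨t, c, hc, hgtc⟩ := exists_pow_mul_not_dvd hq g.natAbs g rfl hg0
        refine ⟨c, hc, ?_⟩
        rw [hmemI]
        have hcz : IsIntegral ℤ (c • z) := by
          rw [zsmul_eq_mul]
          refine IsIntegral.mul ?_ hz
          have : ((c : ℤ) : K) = algebraMap ℤ K c := by simp
          rw [this]; exact isIntegral_algebraMap
        have hgz : ((qn : ℕ) : ℤ) ^ t • (c • z) ∈ A := by
          rw [smul_smul, ← hgtc]
          exact (hmemI g).mp hgI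
        have hei : (minpoly ℤ α).IsEisensteinAt
            (Submodule.span ℤ {((qn : ℕ) : ℤ)}) := by
          rw [hminZ]
          exact eisenstein_X_pow_sub (by norm_num) hq hqm hsf
        exact strip_of_eisenstein hαint hgen hq hei hcz hgz
      · -- q ∈ {2, 3, 5}
        have hq60 : ((qn : ℕ) : ℤ) ∣ (60 : ℤ) := hq60m.resolve_right hqm
        have hqn60 : qn ∣ 60 := by exact_mod_cast hq60
        have hle : qn ≤ 60 := Nat.le_of_dvd (by norm_num) hqn60
        have h2le : 2 ≤ qn := hqn.two_le
        have hqval : qn = 2 ∨ qn = 3 ∨ qn = 5 := by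
          interval_cases qn <;> revert hqn60 hqn <;> decide
        rcases hqval with rfl | rfl | rfl
        · obtain ⟨a, ha, ha2⟩ := exists_a_two h4 hqm
          obtain ⟨c, hc, hcA⟩ := tower_strip (p := 2) (k := 2) (d := 4) (e := 15)
            (by norm_num) (by norm_num) (by norm_num) (by norm_num)
            hsf (by norm_num) hqm ha ha2
            (by rw [show (4 * 15 : ℕ) = 60 by norm_num]; exact hα) hgen
            (by rw [show (4 * 15 : ℕ) = 60 by norm_num]; exact hfr) hz
          exact ⟨c, hc, (hmemI c).mpr hcA⟩
        · obtain ⟨a, ha, ha2⟩ := exists_a_three hsf h9 h9'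
          obtain ⟨c, hc, hcA⟩ := tower_strip (p := 3) (k := 1) (d := 3) (e := 20)
            (by norm_num) (by norm_num) (by norm_num) (by norm_num)
            hsf (by norm_num) hqm ha ha2
            (by rw [show (3 * 20 : ℕ) = 60 by norm_num]; exact hα) hgen
            (by rw [show (3 * 20 : ℕ) = 60 by norm_num]; exact hfr) hz
          exact ⟨c, hc, (hmemI c).mpr hcA⟩
        · obtain ⟨a, ha, ha2⟩ := exists_a_five hsf h25 h25' h25'' h25'''
          obtain ⟨c, hc, hcA⟩ := tower_strip (p := 5) (k := 1) (d := 5) (e := 12)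
            (by norm_num) (by norm_num) (by norm_num) (by norm_num)
            hsf (by norm_num) hqm ha ha2
            (by rw [show (5 * 12 : ℕ) = 60 by norm_num]; exact hα) hgen
            (by rw [show (5 * 12 : ℕ) = 60 by norm_num]; exact hfr) hz
          exact ⟨c, hc, (hmemI c).mpr hcA⟩
    obtain ⟨c, hqc, hcI⟩ := hcon
    rw [hg] at hcI
    have hgc : g ∣ c := Ideal.mem_span_singleton.mp hcI
    exact hqc (hqg.trans hgc)
  have h1 : (1 : ℤ) ∈ I := by
    rw [hg]
    exact Ideal.mem_span_singleton.mpr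
      ((Int.isUnit_iff_natAbs_eq.mpr hnat).dvd)
  have := (hmemI 1).mp h1
  simpa using this
end

section
/- Let K be a number field with ring of integers Z_K, let p be a rational prime, and let f be a positive integer. Let P_f be the number of distinct prime ideals of Z_K lying above p with residue degree f, and let N_f be the number of monic irreducible polynomials of degree f in F_p[x]. If P_f > N_f, then p is a common index divisor of K, i.e., p divides the index (Z_K : ℤ[θ]) for every θ ∈ Z_K with K = ℚ(θ). -/
open Polynomial NumberField

private lemma aeval_mem_span_of_map_cast_eq_zero {R : Type*} [CommRing R] {p : ℕ} (θ : R)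
    {s : ℤ[X]} (hs : s.map (Int.castRingHom (ZMod p)) = 0) :
    aeval θ s ∈ Ideal.span {(p : R)} := by
  rw [aeval_eq_sum_range]
  refine Ideal.sum_mem _ fun i _ => ?_
  obtain ⟨c, hc⟩ : ((p : ℕ) : ℤ) ∣ s.coeff i := by
    rw [← ZMod.intCast_zmod_eq_zero_iff_dvd]
    have := congrArg (fun q => coeff q i) hs
    simpa [coeff_map] using this
  have heq : s.coeff i • θ ^ i = (p : R) * (c • θ ^ i) := by
    rw [hc, mul_smul, zsmul_eq_mul, Int.cast_natCast]
  rw [heq]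
  exact Ideal.mul_mem_right _ _ (Ideal.subset_span rfl)

private lemma finite_monic_irreducible_deg (p f : ℕ) (hp0 : p ≠ 0) :
    Finite {g : (ZMod p)[X] // g.Monic ∧ Irreducible g ∧ g.natDegree = f} := by
  haveI : NeZero p := ⟨hp0⟩
  have hinj : Function.Injective
      (fun g : {g : (ZMod p)[X] // g.Monic ∧ Irreducible g ∧ g.natDegree = f} =>
        (fun i : Fin (f + 1) => g.1.coeff i)) := by
    intro g₁ g₂ hg
    ext1
    ext n
    rcases lt_or_ge n (f + 1) with hn | hn
    · exact congrFun hg ⟨n, hn⟩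
    · rw [coeff_eq_zero_of_natDegree_lt, coeff_eq_zero_of_natDegree_lt]
      · rw [g₂.2.2.2]; omega
      · rw [g₁.2.2.2]; omega
  exact Finite.of_injective _ hinj

set_option maxHeartbeats 1000000 in
set_option synthInstance.maxHeartbeats 400000 in
private lemma key_lemma (K : Type*) [Field K] [NumberField K] (p : ℕ) (hp : p.Prime)
    (f : ℕ) (hf : 0 < f) (θ : 𝓞 K)
    (hidx : ¬ (p : ℕ) ∣ ((Algebra.adjoin ℤ {θ}).toSubring.toAddSubgroup :
        AddSubgroup (𝓞 K)).index)
    (P : Ideal (𝓞 K)) (hP : P.IsPrime)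
    (hPp : P.comap (algebraMap ℤ (𝓞 K)) = Ideal.span {(p : ℤ)})
    (hPf : Ideal.inertiaDeg' (Ideal.span {(p : ℤ)}) P = f) :
    ∃ g : (ZMod p)[X], g.Monic ∧ Irreducible g ∧ g.natDegree = f ∧
      ∀ G : ℤ[X], G.map (Int.castRingHom (ZMod p)) = g →
        P = Ideal.span {((p : ℕ) : 𝓞 K), aeval θ G} := by
  haveI : Fact p.Prime := ⟨hp⟩
  haveI : NeZero p := ⟨hp.ne_zero⟩
  -- Every element of 𝓞 K is congruent to an element of ℤ[θ] modulo p
  have hsur : ∀ x : 𝓞 K, ∃ a ∈ Algebra.adjoin ℤ {θ},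
      x - a ∈ Ideal.span {((p : ℕ) : 𝓞 K)} := by
    intro x
    set N := ((Algebra.adjoin ℤ {θ}).toSubring.toAddSubgroup : AddSubgroup (𝓞 K)).index with hN
    have hcop : IsCoprime (p : ℤ) (N : ℤ) :=
      Nat.isCoprime_iff_coprime.mpr ((Nat.Prime.coprime_iff_not_dvd hp).mpr hidx)
    obtain ⟨u, v, huv⟩ := hcop
    have hNx : (N : ℤ) • x ∈ Algebra.adjoin ℤ {θ} := by
      have h1 : N • x ∈ ((Algebra.adjoin ℤ {θ}).toSubring.toAddSubgroup :
          AddSubgroup (𝓞 K)) := AddSubgroup.nsmul_index_mem _ x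
      rw [natCast_zsmul]
      exact h1
    refine ⟨(v * (N : ℤ)) • x, ?_, ?_⟩
    · rw [mul_smul]
      exact zsmul_mem hNx v
    · have hx : x - (v * (N : ℤ)) • x = (u * (p : ℤ)) • x := by
        calc x - (v * (N : ℤ)) • x
            = (u * (p : ℤ) + v * (N : ℤ)) • x - (v * (N : ℤ)) • x := by rw [huv, one_smul]
          _ = (u * (p : ℤ)) • x := by rw [add_smul]; abel
      rw [hx]
      refine Ideal.mem_span_singleton.mpr ⟨u • x, ?_⟩
      rw [mul_comm, mul_smul, zsmul_eq_mul, Int.cast_natCast]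
  have hpP : ((p : ℕ) : 𝓞 K) ∈ P := by
    have : algebraMap ℤ (𝓞 K) (p : ℤ) ∈ P := by
      rw [← Ideal.mem_comap, hPp]
      exact Ideal.mem_span_singleton_self _
    simpa using this
  have hspanP : Ideal.span {((p : ℕ) : 𝓞 K)} ≤ P := by
    rw [Ideal.span_le, Set.singleton_subset_iff]; exact hpP
  have hPbot : P ≠ ⊥ := by
    intro hbot
    rw [hbot, Ideal.mem_bot] at hpP
    exact hp.ne_zero (by exact_mod_cast hpP)
  haveI : P.IsPrime := hP
  haveI : P.IsMaximal := Ideal.IsPrime.isMaximal hP hPbot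
  haveI : Nontrivial (𝓞 K ⧸ P) := Ideal.Quotient.nontrivial_iff.mpr hP.ne_top
  haveI : CharP (𝓞 K ⧸ P) p := (CharP.charP_iff_prime_eq_zero hp).mpr (by
    rw [← map_natCast (Ideal.Quotient.mk P), Ideal.Quotient.eq_zero_iff_mem]
    exact hpP)
  haveI : Algebra (ZMod p) (𝓞 K ⧸ P) := ZMod.algebra _ p
  haveI : IsScalarTower ℤ (ZMod p) (𝓞 K ⧸ P) :=
    IsScalarTower.of_algebraMap_eq' (RingHom.ext_int _ _)
  set θb : 𝓞 K ⧸ P := Ideal.Quotient.mk P θ with hθb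
  have hbridge : ∀ G : ℤ[X],
      Ideal.Quotient.mk P (aeval θ G) = aeval θb (G.map (Int.castRingHom (ZMod p))) := by
    intro G
    rw [← algebraMap_int_eq, aeval_map_algebraMap]
    simpa [Ideal.Quotient.mkₐ_eq_mk] using
      (aeval_algHom_apply (Ideal.Quotient.mkₐ ℤ P) θ G).symm
  have hsur2 : ∀ y : 𝓞 K ⧸ P, ∃ G : ℤ[X],
      aeval θb (G.map (Int.castRingHom (ZMod p))) = y := by
    intro y
    obtain ⟨x, rfl⟩ := Ideal.Quotient.mk_surjective y
    obtain ⟨a, haA, hxa⟩ := hsur x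
    obtain ⟨G, hG⟩ : ∃ G : ℤ[X], aeval θ G = a := by
      rwa [Algebra.adjoin_singleton_eq_range_aeval, AlgHom.mem_range] at haA
    refine ⟨G, ?_⟩
    rw [← hbridge, hG]
    exact (Ideal.Quotient.mk_eq_mk_iff_sub_mem a x).mpr
      (by simpa using P.neg_mem (hspanP hxa))
  have hgen : Algebra.adjoin (ZMod p) {θb} = ⊤ := by
    rw [Algebra.adjoin_singleton_eq_range_aeval, eq_top_iff]
    intro y _
    obtain ⟨G, hG⟩ := hsur2 y
    exact ⟨G.map (Int.castRingHom (ZMod p)), hG⟩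
  -- inertia degree gives the finrank over ℤ ⧸ (p), which we transfer to ZMod p
  letI : Algebra (ℤ ⧸ Ideal.span {(p : ℤ)}) (𝓞 K ⧸ P) :=
    Ideal.Quotient.algebraQuotientOfLEComap (le_of_eq hPp.symm)
  have hfin : Module.finrank (ℤ ⧸ Ideal.span {(p : ℤ)}) (𝓞 K ⧸ P) = f := by
    rw [Ideal.inertiaDeg', dif_pos hPp] at hPf
    exact hPf
  have hhom : ((algebraMap (ℤ ⧸ Ideal.span {(p : ℤ)}) (𝓞 K ⧸ P)).comp
        (Ideal.Quotient.mk (Ideal.span {(p : ℤ)})))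
      = ((algebraMap (ZMod p) (𝓞 K ⧸ P)).comp
        (((Int.quotientSpanNatEquivZMod p) : ℤ ⧸ Ideal.span {(p : ℤ)} →+* ZMod p).comp
          (Ideal.Quotient.mk (Ideal.span {(p : ℤ)})))) := RingHom.ext_int _ _
  have hrank : Module.rank (ℤ ⧸ Ideal.span {(p : ℤ)}) (𝓞 K ⧸ P)
      = Module.rank (ZMod p) (𝓞 K ⧸ P) := by
    refine rank_eq_of_equiv_equiv
      (⟨(Int.quotientSpanNatEquivZMod p : ℤ ⧸ Ideal.span {(p : ℤ)} → ZMod p),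
        map_zero _⟩ : ZeroHom (ℤ ⧸ Ideal.span {(p : ℤ)}) (ZMod p))
      (AddEquiv.refl _) (Int.quotientSpanNatEquivZMod p).bijective ?_
    intro r m
    obtain ⟨a, rfl⟩ := Ideal.Quotient.mk_surjective r
    show ((Ideal.Quotient.mk (Ideal.span {(p : ℤ)}) a) • m : 𝓞 K ⧸ P)
      = (Int.quotientSpanNatEquivZMod p) (Ideal.Quotient.mk _ a) • m
    rw [Algebra.smul_def, Algebra.smul_def]
    congr 1
    exact RingHom.congr_fun hhom a
  have h1 : Module.finrank (ZMod p) (𝓞 K ⧸ P) = f := by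
    rw [← hfin]
    exact (congrArg Cardinal.toNat hrank).symm
  haveI : FiniteDimensional (ZMod p) (𝓞 K ⧸ P) :=
    FiniteDimensional.of_finrank_pos (by rw [h1]; exact hf)
  have hint : IsIntegral (ZMod p) θb := IsIntegral.of_finite _ _
  have hdeg : (minpoly (ZMod p) θb).natDegree = f := by
    have hfr : Module.finrank (ZMod p) (Algebra.adjoin (ZMod p) {θb}) =
        (minpoly (ZMod p) θb).natDegree := (Algebra.adjoin.powerBasis hint).finrank
    rw [← hfr, hgen, subalgebra_top_finrank_eq_submodule_top_finrank, finrank_top]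
    exact h1
  refine ⟨minpoly (ZMod p) θb, minpoly.monic hint, minpoly.irreducible hint, hdeg, ?_⟩
  intro G hG
  set J := Ideal.span {((p : ℕ) : 𝓞 K), aeval θ G} with hJ
  have hpJ : ((p : ℕ) : 𝓞 K) ∈ J := Ideal.subset_span (Set.mem_insert _ _)
  have hGP : aeval θ G ∈ P := by
    rw [← Ideal.Quotient.eq_zero_iff_mem, hbridge, hG]
    exact minpoly.aeval _ _
  have hJP : J ≤ P := by
    rw [hJ, Ideal.span_le]
    intro x hx
    simp only [Set.mem_insert_iff, Set.mem_singleton_iff] at hx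
    rcases hx with rfl | rfl
    · exact hpP
    · exact hGP
  have hspanJ : Ideal.span {((p : ℕ) : 𝓞 K)} ≤ J := by
    rw [Ideal.span_le, Set.singleton_subset_iff]; exact hpJ
  have hPJ : P ≤ J := by
    intro x hx
    obtain ⟨a, haA, hxa⟩ := hsur x
    obtain ⟨H, hH⟩ : ∃ H : ℤ[X], aeval θ H = a := by
      rwa [Algebra.adjoin_singleton_eq_range_aeval, AlgHom.mem_range] at haA
    have haP : a ∈ P := by
      have h2 : x - a ∈ P := hspanP hxa
      have h3 := P.sub_mem hx h2
      simpa using h3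
    have hdvd : minpoly (ZMod p) θb ∣ H.map (Int.castRingHom (ZMod p)) := by
      apply minpoly.dvd
      rw [← hbridge, hH, Ideal.Quotient.eq_zero_iff_mem]
      exact haP
    obtain ⟨q, hq⟩ := hdvd
    obtain ⟨Q, hQ⟩ := Polynomial.map_surjective (Int.castRingHom (ZMod p)) ZMod.intCast_surjective q
    have hs : (H - G * Q).map (Int.castRingHom (ZMod p)) = 0 := by
      rw [Polynomial.map_sub, Polynomial.map_mul, hq, hG, hQ, sub_self]
    have hsJ : aeval θ (H - G * Q) ∈ J :=
      hspanJ (aeval_mem_span_of_map_cast_eq_zero θ hs)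
    have haJ : a ∈ J := by
      have hsplit : a = aeval θ G * aeval θ Q + aeval θ (H - G * Q) := by
        rw [← hH, map_sub, map_mul]; ring
      rw [hsplit]
      refine J.add_mem (Ideal.mul_mem_right _ _ ?_) hsJ
      exact Ideal.subset_span (Set.mem_insert_iff.mpr (Or.inr rfl))
    have hxsplit : x = (x - a) + a := by ring
    rw [hxsplit]
    exact J.add_mem (hspanJ hxa) haJ
  exact le_antisymm hPJ hJP

/-- **Engstrom/Hensel criterion for common index divisors.** Let `K` be a number field,
`p` a rational prime and `f ≥ 1`. If the number of distinct prime ideals of `𝓞 K` lying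
above `p` with residue degree `f` exceeds the number of monic irreducible polynomials of
degree `f` over `𝔽_p`, then `p` divides the index `(𝓞 K : ℤ[θ])` for every generator
`θ ∈ 𝓞 K` of `K`. -/
theorem prime_common_index_divisor_of_card_primes_gt
    (K : Type*) [Field K] [NumberField K] (p : ℕ) (hp : p.Prime) (f : ℕ) (hf : 0 < f)
    (h : Nat.card {g : Polynomial (ZMod p) // g.Monic ∧ Irreducible g ∧ g.natDegree = f} <
         Nat.card {P : Ideal (𝓞 K) //
           P.IsPrime ∧ P.comap (algebraMap ℤ (𝓞 K)) = Ideal.span {(p : ℤ)} ∧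
           Ideal.inertiaDeg' (Ideal.span {(p : ℤ)}) P = f}) :
    ∀ θ : 𝓞 K, Algebra.adjoin ℚ {(θ : K)} = ⊤ →
      (p : ℕ) ∣ ((Algebra.adjoin ℤ {θ}).toSubring.toAddSubgroup :
        AddSubgroup (𝓞 K)).index := by
  intro θ _
  by_contra hdvd
  haveI := finite_monic_irreducible_deg p f hp.ne_zero
  set F : {P : Ideal (𝓞 K) //
      P.IsPrime ∧ P.comap (algebraMap ℤ (𝓞 K)) = Ideal.span {(p : ℤ)} ∧
      Ideal.inertiaDeg' (Ideal.span {(p : ℤ)}) P = f} →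
      {g : Polynomial (ZMod p) // g.Monic ∧ Irreducible g ∧ g.natDegree = f} := fun P =>
    ⟨(key_lemma K p hp f hf θ hdvd P.1 P.2.1 P.2.2.1 P.2.2.2).choose,
     (key_lemma K p hp f hf θ hdvd P.1 P.2.1 P.2.2.1 P.2.2.2).choose_spec.1,
     (key_lemma K p hp f hf θ hdvd P.1 P.2.1 P.2.2.1 P.2.2.2).choose_spec.2.1,
     (key_lemma K p hp f hf θ hdvd P.1 P.2.1 P.2.2.1 P.2.2.2).choose_spec.2.2.1⟩ with hF
  have hinj : Function.Injective F := by
    intro P Q hPQ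
    have hg : (key_lemma K p hp f hf θ hdvd P.1 P.2.1 P.2.2.1 P.2.2.2).choose
        = (key_lemma K p hp f hf θ hdvd Q.1 Q.2.1 Q.2.2.1 Q.2.2.2).choose := by
      simpa [hF] using congrArg Subtype.val hPQ
    obtain ⟨G, hG⟩ := Polynomial.map_surjective (Int.castRingHom (ZMod p))
      ZMod.intCast_surjective (key_lemma K p hp f hf θ hdvd P.1 P.2.1 P.2.2.1 P.2.2.2).choose
    apply Subtype.ext
    rw [(key_lemma K p hp f hf θ hdvd P.1 P.2.1 P.2.2.1 P.2.2.2).choose_spec.2.2.2 G hG,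
      (key_lemma K p hp f hf θ hdvd Q.1 Q.2.1 Q.2.2.1 Q.2.2.2).choose_spec.2.2.2 G
        (by rw [hG, hg])]
  have hle := Nat.card_le_card_of_injective F hinj
  omega
end

section
/- Let m ≠ ±1 be a squarefree integer not divisible by 3, let α be a complex root of the irreducible polynomial F(x) = x^60 − m over ℚ, and let K = ℚ(α) with ring of integers Z_K. Then 3 does not divide the index (Z_K : ℤ[α]) if and only if m² ≢ 1 (mod 9). -/
open Polynomial NumberField

private theorem aux_dvd_of_aeval_eq_zero {K : Type*} [Field K] [NumberField K] (m : ℤ)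
    (hirr : Irreducible ((X : ℚ[X]) ^ 60 - C (m : ℚ)))
    (α : 𝓞 K) (hα : α ^ 60 = (m : 𝓞 K)) {p : ℤ[X]} (hp : aeval α p = 0) :
    (X ^ 60 - C m : ℤ[X]) ∣ p := by
  have hint : IsIntegral ℤ ((α : K)) := NumberField.RingOfIntegers.isIntegral_coe α
  have hroot : aeval ((α : K)) ((X : ℚ[X]) ^ 60 - C (m : ℚ)) = 0 := by
    have h := congrArg (algebraMap (𝓞 K) K) hα
    push_cast at h
    have : ((α : K)) ^ 60 = ((m : ℤ) : K) := h
    simp [this]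
  have hmQ : minpoly ℚ ((α : K)) = X ^ 60 - C (m : ℚ) :=
    (minpoly.eq_of_irreducible_of_monic hirr hroot (monic_X_pow_sub_C _ (by norm_num))).symm
  have hmZ : minpoly ℤ ((α : K)) = X ^ 60 - C m := by
    have h1 : (minpoly ℤ ((α : K))).map (algebraMap ℤ ℚ) = minpoly ℚ ((α : K)) :=
      (minpoly.isIntegrallyClosed_eq_field_fractions ℚ K hint).symm
    have h2 : ((X ^ 60 - C m : ℤ[X])).map (algebraMap ℤ ℚ) = X ^ 60 - C (m : ℚ) := by
      simp
    apply Polynomial.map_injective (algebraMap ℤ ℚ) (fun a b h => by exact_mod_cast h)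
    rw [h1, hmQ, h2]
  have hp' : aeval ((α : K)) p = 0 := by
    rw [Polynomial.aeval_algebraMap_apply, hp, map_zero]
  rw [← hmZ]
  exact minpoly.isIntegrallyClosed_dvd hint hp'

private theorem aux_squarefree (m : ℤ) (h3 : ¬ (3:ℤ) ∣ m) :
    Squarefree ((X : (ZMod 3)[X]) ^ 20 - C (m : ZMod 3)) := by
  have hm0 : (m : ZMod 3) ≠ 0 := by
    rw [Ne, ZMod.intCast_zmod_eq_zero_iff_dvd]
    exact_mod_cast h3
  exact (separable_X_pow_sub_C (m : ZMod 3) (by decide) hm0).squarefree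

private theorem aux_cube (m : ℤ) :
    ((X : (ZMod 3)[X]) ^ 20 - C (m : ZMod 3)) ^ 3 = X ^ 60 - C (m : ZMod 3) := by
  have h := sub_pow_expChar ((X : (ZMod 3)[X]) ^ 20) (C (m : ZMod 3)) (p := 3)
  rw [h, ← pow_mul, ← map_pow, ZMod.pow_card]

private theorem nilpotent_step {K : Type*} [Field K] [NumberField K] (m : ℤ) (h3 : ¬ (3:ℤ) ∣ m)
    (hirr : Irreducible ((X : ℚ[X]) ^ 60 - C (m : ℚ)))
    (α : 𝓞 K) (hα : α ^ 60 = (m : 𝓞 K))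
    (θ : 𝓞 K) (h : ℤ[X]) (hh : aeval α h = 3 * θ) :
    (X ^ 20 - C (m : ZMod 3)) ∣ h.map (Int.castRingHom (ZMod 3)) := by
  have hint : IsIntegral ℤ θ := IsIntegral.of_finite ℤ θ
  set P := minpoly ℤ θ with hP
  set n := P.natDegree with hn
  have hn0 : 0 < n := minpoly.natDegree_pos hint
  have hmon : P.Monic := minpoly.monic hint
  -- the relation θ^n + Σ_{i<n} c_i θ^i = 0
  have hrel : θ ^ n + ∑ i ∈ Finset.range n, P.coeff i * θ ^ i = 0 := by
    have h0 : aeval θ P = 0 := minpoly.aeval ℤ θ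
    rw [Polynomial.aeval_eq_sum_range, Finset.sum_range_succ] at h0
    rw [← h0, ← hn]
    rw [hmon.coeff_natDegree]
    push_cast
    simp [zsmul_eq_mul]
    ring
  set G : ℤ[X] := ∑ i ∈ Finset.range n, C (P.coeff i * 3 ^ (n - 1 - i)) * h ^ i with hG
  have haG : aeval α G = 3 ^ (n-1) * ∑ i ∈ Finset.range n, P.coeff i * θ ^ i := by
    rw [hG, map_sum, Finset.mul_sum]
    refine Finset.sum_congr rfl fun i hi => ?_
    have hi' : i ≤ n - 1 := Nat.le_sub_one_of_lt (Finset.mem_range.mp hi)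
    rw [map_mul, map_pow, hh, aeval_C, mul_pow]
    simp only [eq_intCast]
    have h3e : ((3:ℤ):𝓞 K) ^ (n - 1 - i) * ((3:ℤ):𝓞 K) ^ i = ((3:ℤ):𝓞 K) ^ (n - 1) := by
      rw [← pow_add, Nat.sub_add_cancel hi']
    push_cast
    push_cast at h3e
    linear_combination (↑(P.coeff i) * θ ^ i) * h3e
  have key : aeval α (h ^ n + 3 * G) = 0 := by
    rw [map_add, map_pow, hh, map_mul, haG, mul_pow]
    have h3n : (3:𝓞 K) * 3 ^ (n-1) = 3 ^ n := by
      rw [← pow_succ', Nat.sub_add_cancel hn0]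
    have : (3:ℤ[X]) = C 3 := by norm_num
    rw [this, aeval_C]
    have h3' : algebraMap ℤ (𝓞 K) 3 = 3 := by simp
    rw [h3', ← mul_assoc, h3n, ← mul_add, hrel, mul_zero]
  have hdvd := aux_dvd_of_aeval_eq_zero m hirr α hα key
  have hdvd2 : ((X : (ZMod 3)[X]) ^ 60 - C (m : ZMod 3)) ∣ (h.map (Int.castRingHom (ZMod 3))) ^ n := by
    have := Polynomial.map_dvd (Int.castRingHom (ZMod 3)) hdvd
    simp only [Polynomial.map_add, Polynomial.map_sub, Polynomial.map_mul, Polynomial.map_pow,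
      Polynomial.map_X, Polynomial.map_C, Polynomial.map_ofNat] at this
    have h33 : (3 : (ZMod 3)[X]) = 0 := by
      exact_mod_cast CharP.cast_eq_zero ((ZMod 3)[X]) 3
    simpa [h33] using this
  refine (aux_squarefree m h3).dvd_pow_iff_dvd hn0.ne' |>.mp ?_
  exact dvd_trans (by rw [← aux_cube m]; exact dvd_pow_self _ (by norm_num)) hdvd2

private theorem div_step (m : ℤ) {h : ℤ[X]}
    (hdvd : (X ^ 20 - C (m : ZMod 3)) ∣ h.map (Int.castRingHom (ZMod 3))) :
    ∃ Q R : ℤ[X], h = (X ^ 20 - C m) * Q + 3 * R := by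
  have hT : (X ^ 20 - C m : ℤ[X]).Monic := monic_X_pow_sub_C _ (by norm_num)
  have hT3 : (X ^ 20 - C (m : ZMod 3) : (ZMod 3)[X]).Monic := monic_X_pow_sub_C _ (by norm_num)
  have hmap : ((X ^ 20 - C m : ℤ[X])).map (Int.castRingHom (ZMod 3)) = X ^ 20 - C (m : ZMod 3) := by
    simp
  have hsplit := modByMonic_add_div h (X ^ 20 - C m)
  have hzero : (h %ₘ (X ^ 20 - C m)).map (Int.castRingHom (ZMod 3)) = 0 := by
    rw [Polynomial.map_modByMonic _ hT, hmap]
    exact (modByMonic_eq_zero_iff_dvd hT3).mpr hdvd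
  have hcoeff : ∀ i, (3:ℤ) ∣ (h %ₘ (X ^ 20 - C m)).coeff i := by
    intro i
    have := congrArg (fun p => Polynomial.coeff p i) hzero
    simp only [coeff_map, coeff_zero] at this
    rwa [show ((Int.castRingHom (ZMod 3)) ((h %ₘ (X ^ 20 - C m)).coeff i)) =
      (((h %ₘ (X ^ 20 - C m)).coeff i : ℤ) : ZMod 3) from rfl,
      ZMod.intCast_zmod_eq_zero_iff_dvd] at this
  obtain ⟨R, hR⟩ := (C_dvd_iff_dvd_coeff (3:ℤ) _).mpr hcoeff
  refine ⟨h /ₘ (X ^ 20 - C m), R, ?_⟩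
  have hC3 : (C (3:ℤ)) = 3 := by norm_num
  calc h = h %ₘ (X ^ 20 - C m) + (X ^ 20 - C m) * (h /ₘ (X ^ 20 - C m)) := hsplit.symm
  _ = (X ^ 20 - C m) * (h /ₘ (X ^ 20 - C m)) + 3 * R := by rw [hR, hC3]; ring

private theorem no_three_torsion {K : Type*} [Field K] [NumberField K] (m c : ℤ)
    (h3 : ¬ (3:ℤ) ∣ m) (hc : 1 - m ^ 2 = 3 * c) (hc3 : ¬ (3:ℤ) ∣ c)
    (hirr : Irreducible ((X : ℚ[X]) ^ 60 - C (m : ℚ)))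
    (α : 𝓞 K) (hα : α ^ 60 = (m : 𝓞 K))
    (θ : 𝓞 K) (hθ : 3 * θ ∈ Algebra.adjoin ℤ {α}) : θ ∈ Algebra.adjoin ℤ {α} := by
  classical
  have h30 : (3 : 𝓞 K) ≠ 0 := by norm_num
  -- notation
  set f := Int.castRingHom (ZMod 3) with hf
  set T : ℤ[X] := X ^ 20 - C m with hT
  set U : ℤ[X] := C (m * c) - C m * X ^ 20 * T with hU
  set δ : 𝓞 K := α ^ 20 - (m : 𝓞 K) with hδdef
  set u : 𝓞 K := (m : 𝓞 K) * (c : 𝓞 K) - (m : 𝓞 K) * α ^ 20 * δ with hudef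
  have haT : aeval α T = δ := by simp [hT, hδdef]
  have haU : aeval α U = u := by
    simp only [hU, map_sub, map_mul, map_pow, aeval_C, aeval_X, haT, algebraMap_int_eq, eq_intCast, map_intCast]
    rfl
  have hc' : (1 : 𝓞 K) - (m : 𝓞 K) ^ 2 = 3 * (c : 𝓞 K) := by exact_mod_cast congrArg (Int.cast : ℤ → 𝓞 K) hc
  have hδ3 : δ ^ 3 = 3 * u := by
    rw [hδdef, hudef]
    linear_combination hα + (m : 𝓞 K) * hc'
  -- unpack membership
  rw [Algebra.adjoin_singleton_eq_range_aeval, AlgHom.mem_range] at hθ ⊢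
  obtain ⟨g, hg⟩ := hθ
  -- Stage 0
  obtain ⟨Q, R, hQR⟩ := div_step m (nilpotent_step m h3 hirr α hα θ g hg)
  set q : 𝓞 K := aeval α Q with hq
  set r : 𝓞 K := aeval α R with hr
  have e1 : 3 * θ = δ * q + 3 * r := by
    rw [← hg, hQR]
    simp only [map_add, map_mul, map_ofNat, haT, ← hq, ← hr]
    rw [← haT]
  set θ₁ : 𝓞 K := θ - r with hθ₁
  have e2 : 3 * θ₁ = δ * q := by rw [hθ₁]; linear_combination e1
  -- Stage 1
  have e3 : aeval α (U * Q ^ 3) = 3 * (3 * θ₁ ^ 3) := by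
    have expand : aeval α (U * Q ^ 3) = u * q ^ 3 := by rw [map_mul, map_pow, haU, hq]
    rw [expand]
    have cube : (3:𝓞 K) * (3 * (3 * θ₁ ^ 3)) = 3 * (u * q ^ 3) := by
      linear_combination (9 * θ₁^2 + 3 * θ₁ * (δ * q) + (δ * q)^2) * e2 + q ^ 3 * hδ3
    exact (mul_left_cancel₀ h30 cube).symm
  have s2 := nilpotent_step m h3 hirr α hα (3 * θ₁ ^ 3) (U * Q ^ 3) e3
  -- extract divisibility of Q
  have humc : IsUnit (C ((m * c : ℤ) : ZMod 3)) := by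
    rw [isUnit_C]
    refine isUnit_iff_ne_zero.mpr ?_
    rw [Ne, ZMod.intCast_zmod_eq_zero_iff_dvd]
    intro hdd
    rcases (Int.prime_three.2.2 m c hdd) with h' | h'
    exacts [h3 h', hc3 h']
  have hTmap : T.map f = X ^ 20 - C ((m:ℤ) : ZMod 3) := by simp [hT, hf]
  have hUmap : (U.map f) = C ((m * c : ℤ) : ZMod 3) - C ((m:ℤ) : ZMod 3) * X ^ 20 * (T.map f) := by
    simp [hU, hf, Polynomial.map_mul]
  have hdvdQ : (X ^ 20 - C ((m:ℤ) : ZMod 3)) ∣ Q.map f := by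
    have hd1 : (X ^ 20 - C ((m:ℤ) : ZMod 3)) ∣ C ((m * c : ℤ) : ZMod 3) * (Q.map f) ^ 3 := by
      have : C ((m * c : ℤ) : ZMod 3) * (Q.map f) ^ 3
          = (U * Q ^ 3).map f + (X ^ 20 - C ((m:ℤ) : ZMod 3)) *
            (C ((m:ℤ) : ZMod 3) * X ^ 20 * (Q.map f) ^ 3) := by
        rw [Polynomial.map_mul, Polynomial.map_pow, hUmap, hTmap]
        ring
      rw [this]
      exact dvd_add (hTmap ▸ s2) (Dvd.intro _ rfl)
    exact ((aux_squarefree m h3).dvd_pow_iff_dvd three_ne_zero).mp ((humc.dvd_mul_left).mp hd1)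
  obtain ⟨Q₁, R₁, hQR₁⟩ := div_step m hdvdQ
  set q₁ : 𝓞 K := aeval α Q₁ with hq₁
  set r₁ : 𝓞 K := aeval α R₁ with hr₁
  have e4 : q = δ * q₁ + 3 * r₁ := by
    rw [hq, hQR₁]
    simp only [map_add, map_mul, map_ofNat, haT, ← hq₁, ← hr₁]
    rw [← haT]
  set θ₂ : 𝓞 K := θ₁ - δ * r₁ with hθ₂
  have e5 : 3 * θ₂ = δ ^ 2 * q₁ := by
    rw [hθ₂]
    have : 3 * θ₁ = δ * (δ * q₁ + 3 * r₁) := by rw [← e4]; exact e2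
    linear_combination this
  -- Stage 2
  have e6 : aeval α (U ^ 2 * Q₁ ^ 3) = 3 * (θ₂ ^ 3) := by
    have expand : aeval α (U ^ 2 * Q₁ ^ 3) = u ^ 2 * q₁ ^ 3 := by
      rw [map_mul, map_pow, map_pow, haU, hq₁]
    rw [expand]
    have cube : (9:𝓞 K) * (3 * θ₂ ^ 3) = 9 * (u ^ 2 * q₁ ^ 3) := by
      linear_combination (9 * θ₂^2 + 3 * θ₂ * (δ^2 * q₁) + (δ^2 * q₁)^2) * e5
        + (δ ^ 3 + 3 * u) * q₁ ^ 3 * hδ3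
    exact (mul_left_cancel₀ (by norm_num : (9:𝓞 K) ≠ 0) cube).symm
  have s3 := nilpotent_step m h3 hirr α hα (θ₂ ^ 3) (U ^ 2 * Q₁ ^ 3) e6
  have hdvdQ₁ : (X ^ 20 - C ((m:ℤ) : ZMod 3)) ∣ Q₁.map f := by
    have hd1 : (X ^ 20 - C ((m:ℤ) : ZMod 3)) ∣ C ((m * c : ℤ) : ZMod 3) ^ 2 * (Q₁.map f) ^ 3 := by
      have : C ((m * c : ℤ) : ZMod 3) ^ 2 * (Q₁.map f) ^ 3
          = (U ^ 2 * Q₁ ^ 3).map f + (X ^ 20 - C ((m:ℤ) : ZMod 3)) *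
            ((2 * C ((m * c : ℤ) : ZMod 3) * C ((m:ℤ) : ZMod 3) * X ^ 20
              - (C ((m:ℤ) : ZMod 3) * X ^ 20) ^ 2 * (X ^ 20 - C ((m:ℤ) : ZMod 3))) * (Q₁.map f) ^ 3) := by
        rw [Polynomial.map_mul, Polynomial.map_pow, Polynomial.map_pow, hUmap, hTmap]
        ring
      rw [this]
      exact dvd_add (hTmap ▸ s3) (Dvd.intro _ rfl)
    exact ((aux_squarefree m h3).dvd_pow_iff_dvd three_ne_zero).mp (((humc.pow 2).dvd_mul_left).mp hd1)
  obtain ⟨Q₂, R₂, hQR₂⟩ := div_step m hdvdQ₁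
  set q₂ : 𝓞 K := aeval α Q₂ with hq₂
  set r₂ : 𝓞 K := aeval α R₂ with hr₂
  have e7 : q₁ = δ * q₂ + 3 * r₂ := by
    rw [hq₁, hQR₂]
    simp only [map_add, map_mul, map_ofNat, haT, ← hq₂, ← hr₂]
    rw [← haT]
  -- conclude θ₂ ∈ range
  have e8 : θ₂ = u * q₂ + δ ^ 2 * r₂ := by
    have : (3:𝓞 K) * θ₂ = 3 * (u * q₂ + δ ^ 2 * r₂) := by
      rw [e5, e7]
      linear_combination q₂ * hδ3
    exact mul_left_cancel₀ h30 this
  refine ⟨U * Q₂ + T ^ 2 * R₂ + T * R₁ + R, ?_⟩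
  have hfinal : aeval α (U * Q₂ + T ^ 2 * R₂ + T * R₁ + R)
      = u * q₂ + δ ^ 2 * r₂ + δ * r₁ + r := by
    simp only [map_add, map_mul, map_pow, haU, haT, ← hq₂, ← hr₂, ← hr₁, ← hr]
  rw [hθ₂, hθ₁] at e8
  rw [hfinal]
  linear_combination -e8

private theorem quot_finite {K : Type*} [Field K] [NumberField K] (α : 𝓞 K)
    (hgen : Algebra.adjoin ℚ {(α : K)} = ⊤) :
    Finite (𝓞 K ⧸ ((Algebra.adjoin ℤ {α}).toSubring.toAddSubgroup : AddSubgroup (𝓞 K))) := by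
  set H : AddSubgroup (𝓞 K) := (Algebra.adjoin ℤ {α}).toSubring.toAddSubgroup with hH
  haveI : AddGroup.FG (𝓞 K) := Module.Finite.iff_addGroup_fg.mp inferInstance
  apply AddCommGroup.finite_of_fg_torsion
  intro x
  obtain ⟨y, rfl⟩ := QuotientAddGroup.mk_surjective x
  -- find d • y ∈ adjoin
  have hy : (y : K) ∈ Algebra.adjoin ℚ {(α : K)} := hgen ▸ Algebra.mem_top
  rw [Algebra.adjoin_singleton_eq_range_aeval, AlgHom.mem_range] at hy
  obtain ⟨P, hP⟩ := hy
  obtain ⟨b, hb⟩ := IsLocalization.integerNormalization_map_to_map (nonZeroDivisors ℤ) P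
  set Z : ℤ[X] := IsLocalization.integerNormalization (nonZeroDivisors ℤ) P with hZ
  have hb' : aeval ((α : K)) (Z.map (algebraMap ℤ ℚ)) = (b : ℤ) • (y : K) := by
    rw [hb, map_zsmul, hP]
  rw [aeval_map_algebraMap, Polynomial.aeval_algebraMap_apply] at hb'
  have hmem : ((b : ℤ) • y) ∈ Algebra.adjoin ℤ {α} := by
    rw [Algebra.adjoin_singleton_eq_range_aeval, AlgHom.mem_range]
    refine ⟨Z, ?_⟩
    apply NumberField.RingOfIntegers.ext
    rw [NumberField.RingOfIntegers.coe_eq_algebraMap, NumberField.RingOfIntegers.coe_eq_algebraMap, hb']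
    exact (map_zsmul (algebraMap (𝓞 K) K) _ _).symm
  have hbne : (b : ℤ) ≠ 0 := nonZeroDivisors.coe_ne_zero b
  refine isOfFinAddOrder_iff_nsmul_eq_zero.mpr ⟨(b : ℤ).natAbs, Int.natAbs_pos.mpr hbne, ?_⟩
  have : ((b : ℤ).natAbs : ℤ) • y ∈ H := by
    rcases Int.natAbs_eq (b : ℤ) with he | he
    · rw [← he]; exact hmem
    · rw [show (((b : ℤ).natAbs : ℤ)) = -(b : ℤ) by omega, neg_zsmul]
      exact H.neg_mem hmem
  rw [natCast_zsmul] at this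
  show QuotientAddGroup.mk ((b : ℤ).natAbs • y) = 0
  exact (QuotientAddGroup.eq_zero_iff _).mpr this

private theorem three_dvd_index {K : Type*} [Field K] [NumberField K] (m : ℤ)
    (hirr : Irreducible ((X : ℚ[X]) ^ 60 - C (m : ℚ)))
    (α : 𝓞 K) (hα : α ^ 60 = (m : 𝓞 K))
    (h9 : m ^ 2 ≡ 1 [ZMOD 9]) :
    3 ∣ ((Algebra.adjoin ℤ {α}).toSubring.toAddSubgroup : AddSubgroup (𝓞 K)).index := by
  classical
  -- find ε and k
  obtain ⟨ε, hε2, k, hk⟩ : ∃ ε : ℤ, ε ^ 2 = 1 ∧ ∃ k : ℤ, ε * m = 1 - 9 * k := by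
    have hm9 : ((m : ZMod 9)) ^ 2 = 1 := by
      have h := (ZMod.intCast_eq_intCast_iff (m ^ 2) 1 9).mpr (by exact_mod_cast h9)
      push_cast at h
      exact h
    have hdec : ∀ x : ZMod 9, x ^ 2 = 1 → x = 1 ∨ x = -1 := by decide
    rcases hdec _ hm9 with h1 | h1
    · refine ⟨1, by norm_num, ?_⟩
      have : ((m - 1 : ℤ) : ZMod 9) = 0 := by push_cast [h1]; ring
      obtain ⟨j, hj⟩ := (ZMod.intCast_zmod_eq_zero_iff_dvd _ 9).mp this
      exact ⟨-j, by push_cast at hj ⊢; linarith⟩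
    · refine ⟨-1, by norm_num, ?_⟩
      have : ((m + 1 : ℤ) : ZMod 9) = 0 := by push_cast [h1]; ring
      obtain ⟨j, hj⟩ := (ZMod.intCast_zmod_eq_zero_iff_dvd _ 9).mp this
      exact ⟨j, by push_cast at hj ⊢; linarith⟩
  have hε3 : ε ^ 3 = ε := by
    have : ε ^ 3 = ε * ε ^ 2 := by ring
    rw [this, hε2, mul_one]
  -- set up K-side elements
  have hαK : ((α : K)) ^ 60 = (m : K) := by
    have h := congrArg (algebraMap (𝓞 K) K) hα
    push_cast at h
    exact h
  set γ : K := (ε : K) * (α : K) ^ 20 with hγdef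
  have hγ : γ ^ 3 = 1 - 9 * (k : K) := by
    have hk' : ((ε : K)) * (m : K) = 1 - 9 * (k : K) := by exact_mod_cast congrArg (Int.cast : ℤ → K) hk
    have hεK : ((ε : K)) ^ 3 = (ε : K) := by exact_mod_cast congrArg (Int.cast : ℤ → K) hε3
    rw [hγdef, mul_pow, ← pow_mul]
    norm_num
    rw [hεK, hαK, hk']
  set t : K := (1 + γ + γ ^ 2) / 3 with htdef
  have h3t : (3 : K) * t = 1 + γ + γ ^ 2 := by
    rw [htdef]; field_simp
  set pol : ℤ[X] := X ^ 3 - X ^ 2 + C (3 * k) * X - C (3 * k ^ 2) with hpol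
  have hmon : pol.Monic := by
    rw [hpol]
    monicity!
  have haev : aeval t pol = 0 := by
    rw [hpol]
    simp only [map_add, map_sub, map_mul, map_pow, aeval_X, aeval_C, algebraMap_int_eq,
      eq_intCast, map_ofNat, map_intCast]
    push_cast
    linear_combination ((t ^ 2 + t * (1 + γ + γ ^ 2) / 3 + (1 + γ + γ ^ 2) ^ 2 / 9) / 3
        - (3 * t + (1 + γ + γ ^ 2)) / 9 + (k : K)) * h3t
      + ((γ ^ 3 + 3 * γ ^ 2 + 3 * γ + (2 - 9 * (k : K))) / 27) * hγ
  have hint : IsIntegral ℤ t := ⟨pol, hmon, by rwa [← aeval_def]⟩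
  set θ : 𝓞 K := ⟨t, hint⟩ with hθdef
  have hθcoe : (θ : K) = t := rfl
  have hγsq : γ ^ 2 = ((α : K)) ^ 40 := by
    have hεK2 : ((ε : K)) ^ 2 = 1 := by exact_mod_cast congrArg (Int.cast : ℤ → K) hε2
    rw [hγdef, mul_pow, hεK2, one_mul, ← pow_mul]
  have h3θ : 3 * θ = aeval α (1 + C ε * X ^ 20 + X ^ 40) := by
    apply NumberField.RingOfIntegers.ext
    have hRHS : ((aeval α (1 + C ε * X ^ 20 + X ^ 40) : 𝓞 K) : K)
        = 1 + γ + γ ^ 2 := by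
      rw [NumberField.RingOfIntegers.coe_eq_algebraMap, ← Polynomial.aeval_algebraMap_apply]
      simp only [map_add, map_mul, map_pow, aeval_X, aeval_C, map_one, algebraMap_int_eq,
        eq_intCast, map_intCast]
      rw [← hγsq, hγdef]
    have hLHS : ((3 * θ : 𝓞 K) : K) = 3 * t := by
      push_cast
      rfl
    rw [hLHS, hRHS, h3t]
  have hnot : θ ∉ Algebra.adjoin ℤ {α} := by
    intro hmem
    rw [Algebra.adjoin_singleton_eq_range_aeval, AlgHom.mem_range] at hmem
    obtain ⟨p, hp⟩ := hmem
    have hz : aeval α (1 + C ε * X ^ 20 + X ^ 40 - 3 * p) = 0 := by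
      rw [map_sub, ← h3θ, map_mul, hp, map_ofNat]
      ring
    have hdvd := aux_dvd_of_aeval_eq_zero m hirr α hα hz
    have hdvd3 := Polynomial.map_dvd (Int.castRingHom (ZMod 3)) hdvd
    have h33 : (3 : (ZMod 3)[X]) = 0 := by
      exact_mod_cast CharP.cast_eq_zero ((ZMod 3)[X]) 3
    simp only [Polynomial.map_add, Polynomial.map_sub, Polynomial.map_mul, Polynomial.map_pow,
      Polynomial.map_one, Polynomial.map_X, Polynomial.map_C, Polynomial.map_ofNat, h33,
      zero_mul, sub_zero] at hdvd3
    set D : (ZMod 3)[X] := 1 + C ((Int.castRingHom (ZMod 3)) ε) * X ^ 20 + X ^ 40 with hD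
    have hDne : D ≠ 0 := by
      intro h0
      have := congrArg (fun q => Polynomial.coeff q 0) h0
      simp [hD, coeff_one, Polynomial.coeff_X_pow] at this
    have hdeg : D.natDegree ≤ 40 := by
      rw [hD]
      compute_degree
    have h60 : (X ^ 60 - C ((Int.castRingHom (ZMod 3)) m) : (ZMod 3)[X]).natDegree = 60 :=
      natDegree_X_pow_sub_C
    have hle := Polynomial.natDegree_le_of_dvd hdvd3 hDne
    omega
  -- conclude
  set H : AddSubgroup (𝓞 K) := (Algebra.adjoin ℤ {α}).toSubring.toAddSubgroup with hH
  set x : 𝓞 K ⧸ H := QuotientAddGroup.mk θ with hx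
  have hx0 : x ≠ 0 := by
    rw [hx, Ne, QuotientAddGroup.eq_zero_iff]
    exact hnot
  have hx3 : (3 : ℕ) • x = 0 := by
    rw [hx, ← QuotientAddGroup.mk_nsmul, QuotientAddGroup.eq_zero_iff]
    have : (3 : ℕ) • θ = 3 * θ := by push_cast [nsmul_eq_mul]; ring
    rw [this, h3θ]
    show aeval α (1 + C ε * X ^ 20 + X ^ 40) ∈ Algebra.adjoin ℤ {α}
    rw [Algebra.adjoin_singleton_eq_range_aeval, AlgHom.mem_range]
    exact ⟨_, rfl⟩
  have hord : addOrderOf x = 3 := by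
    have hdvd := addOrderOf_dvd_of_nsmul_eq_zero hx3
    rcases (Nat.prime_three).eq_one_or_self_of_dvd _ hdvd with h1 | h1
    · exact absurd (AddMonoid.addOrderOf_eq_one_iff.mp h1) hx0
    · exact h1
  have := addOrderOf_dvd_natCard x
  rw [hord] at this
  exact this


/-- If `m ≠ ±1` is a squarefree integer not divisible by `3` and `α ∈ 𝓞 K` a root of the
irreducible polynomial `x^60 - m` generating `K` over `ℚ`, then `3` does not divide the
index `(𝓞 K : ℤ[α])` if and only if `m² ≢ 1 (mod 9)`. -/
theorem pure_deg60_three_not_dvd_index_iff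
    (m : ℤ) (hsf : Squarefree m) (hm1 : m ≠ 1) (hm2 : m ≠ -1) (h3 : ¬ (3 : ℤ) ∣ m)
    (hirr : Irreducible ((X : ℚ[X]) ^ 60 - C (m : ℚ)))
    (K : Type*) [Field K] [NumberField K] (α : 𝓞 K)
    (hα : α ^ 60 = (m : 𝓞 K))
    (hgen : Algebra.adjoin ℚ {(α : K)} = ⊤) :
    (¬ 3 ∣ ((Algebra.adjoin ℤ {α}).toSubring.toAddSubgroup :
        AddSubgroup (𝓞 K)).index) ↔ ¬ m ^ 2 ≡ 1 [ZMOD 9] := by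
  classical
  constructor
  · intro hnd h9
    exact hnd (three_dvd_index m hirr α hα h9)
  · intro h9 hdvd
    -- extract c with 1 - m² = 3c, 3 ∤ c
    have hm0 : (m : ZMod 3) ≠ 0 := by
      rw [Ne, ZMod.intCast_zmod_eq_zero_iff_dvd]
      exact_mod_cast h3
    have hsq1 : ((m : ZMod 3)) ^ 2 = 1 := by
      haveI : Fact (Nat.Prime 3) := ⟨by norm_num⟩
      exact ZMod.pow_card_sub_one_eq_one hm0
    have h31 : (3 : ℤ) ∣ 1 - m ^ 2 := by
      have h0 : ((1 - m ^ 2 : ℤ) : ZMod 3) = 0 := by push_cast [hsq1]; ring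
      exact_mod_cast (ZMod.intCast_zmod_eq_zero_iff_dvd _ 3).mp h0
    obtain ⟨c, hc⟩ := h31
    have hc3 : ¬ (3 : ℤ) ∣ c := by
      intro hdc
      apply h9
      rw [Int.ModEq]
      obtain ⟨d, hd⟩ := hdc
      omega
    -- the quotient is a finite group
    haveI hfin := quot_finite α hgen
    haveI : Fintype (𝓞 K ⧸ ((Algebra.adjoin ℤ {α}).toSubring.toAddSubgroup :
        AddSubgroup (𝓞 K))) := Fintype.ofFinite _
    haveI : Fact (Nat.Prime 3) := ⟨by norm_num⟩
    have hdvd' : 3 ∣ Fintype.card (𝓞 K ⧸ ((Algebra.adjoin ℤ {α}).toSubring.toAddSubgroup :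
        AddSubgroup (𝓞 K))) := by
      rwa [AddSubgroup.index, Nat.card_eq_fintype_card] at hdvd
    obtain ⟨x, hx⟩ := exists_prime_addOrderOf_dvd_card 3 hdvd'
    obtain ⟨y, rfl⟩ := QuotientAddGroup.mk_surjective x
    have h3y0 : ((3 : ℕ) • (QuotientAddGroup.mk y : 𝓞 K ⧸ ((Algebra.adjoin ℤ {α}).toSubring.toAddSubgroup : AddSubgroup (𝓞 K)))) = 0 := by
      rw [← hx]
      exact addOrderOf_nsmul_eq_zero _
    have h3y : 3 * y ∈ Algebra.adjoin ℤ {α} := by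
      rw [← QuotientAddGroup.mk_nsmul, QuotientAddGroup.eq_zero_iff] at h3y0
      have hmul : (3 : ℕ) • y = 3 * y := by push_cast [nsmul_eq_mul]; ring
      rwa [hmul] at h3y0
    have hy := no_three_torsion m c h3 hc hc3 hirr α hα y h3y
    have : (QuotientAddGroup.mk y : 𝓞 K ⧸ ((Algebra.adjoin ℤ {α}).toSubring.toAddSubgroup :
        AddSubgroup (𝓞 K))) = 0 := (QuotientAddGroup.eq_zero_iff _).mpr hy
    rw [this] at hx
    simp at hx
end
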